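/- If H is a proper subgraph of a connected graph G of order n and diameter D, then μ(G) − μ(H) > 1/(μ(G)^{2D} · n), where μ denotes the largest adjacency eigenvalue. -/

import Mathlib

open Classical in
noncomputable def adjMat {V : Type*} [Fintype V] (G : SimpleGraph V) :
    Matrix V V ℝ :=
  Matrix.of fun i j => if G.Adj i j then 1 else 0

def IsAdjEigenvalue {V : Type*} [Fintype V] (A : Matrix V V ℝ) (μ : ℝ) : Prop :=
  ∃ x : V → ℝ, x ≠ 0 ∧ A.mulVec x = μ • x

def IsMaxAdjEigenvalue {V : Type*} [Fintype V] (A : Matrix V V ℝ) (μ : ℝ) : Prop :=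
  IsAdjEigenvalue A μ ∧ ∀ ν, IsAdjEigenvalue A ν → ν ≤ μ

def IsMinAdjEigenvalue {V : Type*} [Fintype V] (A : Matrix V V ℝ) (μ : ℝ) : Prop :=
  IsAdjEigenvalue A μ ∧ ∀ ν, IsAdjEigenvalue A ν → μ ≤ ν

open Matrix Finset

section aux

variable {m : ℕ}

lemma adjMat_nonneg (G : SimpleGraph (Fin m)) (i j : Fin m) : 0 ≤ adjMat G i j := by
  unfold adjMat; simp only [Matrix.of_apply]; split <;> norm_num

lemma adjMat_adj (G : SimpleGraph (Fin m)) {i j : Fin m} (h : G.Adj i j) :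
    adjMat G i j = 1 := by
  unfold adjMat; simp only [Matrix.of_apply]; rw [if_pos h]

lemma adjMat_not_adj (G : SimpleGraph (Fin m)) {i j : Fin m} (h : ¬ G.Adj i j) :
    adjMat G i j = 0 := by
  unfold adjMat; simp only [Matrix.of_apply]; rw [if_neg h]

lemma adjMat_isHermitian (G : SimpleGraph (Fin m)) : (adjMat G).IsHermitian := by
  ext i j
  unfold adjMat
  simp only [Matrix.conjTranspose_apply, Matrix.of_apply, star_trivial]
  by_cases h : G.Adj j i
  · rw [if_pos h, if_pos h.symm]
  · rw [if_neg h, if_neg (fun h' => h h'.symm)]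

lemma adjMat_transpose (G : SimpleGraph (Fin m)) : (adjMat G)ᵀ = adjMat G := by
  ext i j
  have := congrFun (congrFun (adjMat_isHermitian G) i) j
  simpa [Matrix.conjTranspose_apply, star_trivial] using this

lemma dot_mulVec_eq_sum (A : Matrix (Fin m) (Fin m) ℝ) (x : Fin m → ℝ) :
    x ⬝ᵥ A *ᵥ x = ∑ i, ∑ j, x i * (A i j * x j) := by
  simp [dotProduct, Matrix.mulVec, Finset.mul_sum]

/-- The Rayleigh quotient bound: any quadratic form value is at most the max
eigenvalue times the norm squared. -/
lemma rayleigh_le {A : Matrix (Fin m) (Fin m) ℝ} (hA : A.IsHermitian) {μ : ℝ}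
    (hmax : IsMaxAdjEigenvalue A μ) (x : Fin m → ℝ) :
    x ⬝ᵥ A *ᵥ x ≤ μ * (x ⬝ᵥ x) := by
  have heig : ∀ i, hA.eigenvalues i ≤ μ := fun i =>
    hmax.2 _ ⟨_, (by simpa using hA.eigenvectorBasis.orthonormal.ne_zero i), hA.mulVec_eigenvectorBasis i⟩
  have hU : (hA.eigenvectorUnitary : Matrix (Fin m) (Fin m) ℝ) *
      star (hA.eigenvectorUnitary : Matrix (Fin m) (Fin m) ℝ) = 1 :=
    (Matrix.mem_unitaryGroup_iff).mp hA.eigenvectorUnitary.2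
  obtain ⟨y, hy⟩ : ∃ y : Fin m → ℝ,
      y = star (hA.eigenvectorUnitary : Matrix (Fin m) (Fin m) ℝ) *ᵥ x := ⟨_, rfl⟩
  have key : ∀ z : Fin m → ℝ,
      x ⬝ᵥ (hA.eigenvectorUnitary : Matrix (Fin m) (Fin m) ℝ) *ᵥ z = y ⬝ᵥ z := by
    intro z
    rw [Matrix.dotProduct_mulVec, hy]
    congr 1
    rw [show star (hA.eigenvectorUnitary : Matrix (Fin m) (Fin m) ℝ) =
        (hA.eigenvectorUnitary : Matrix (Fin m) (Fin m) ℝ)ᵀ by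
      ext i j; simp [Matrix.conjTranspose_apply]]
    rw [Matrix.mulVec_transpose]
  have hyy : y ⬝ᵥ y = x ⬝ᵥ x := by
    have h := key y
    rw [hy, Matrix.mulVec_mulVec, hU, Matrix.one_mulVec, ← hy] at h
    exact h.symm
  have hquad : x ⬝ᵥ A *ᵥ x = ∑ i, hA.eigenvalues i * (y i * y i) := by
    conv_lhs => rw [hA.spectral_theorem, Unitary.conjStarAlgAut_apply]
    rw [← Matrix.mulVec_mulVec, ← Matrix.mulVec_mulVec, key, ← hy]
    simp only [dotProduct]
    refine Finset.sum_congr rfl fun i _ => ?_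
    rw [Matrix.mulVec_diagonal]
    simp only [Function.comp_apply, RCLike.ofReal_real_eq_id, id_eq]
    ring
  rw [hquad, hyy.symm]
  have : μ * (y ⬝ᵥ y) = ∑ i, μ * (y i * y i) := by
    simp [dotProduct, Finset.mul_sum]
  rw [this]
  exact Finset.sum_le_sum fun i _ =>
    mul_le_mul_of_nonneg_right (heig i) (mul_self_nonneg _)

/-- The max eigenvalue of a nonnegative symmetric matrix has a nonnegative
eigenvector. -/
lemma exists_nonneg_eigenvector {A : Matrix (Fin m) (Fin m) ℝ} (hA : A.IsHermitian)
    (hnn : ∀ i j, 0 ≤ A i j) {μ : ℝ} (hmax : IsMaxAdjEigenvalue A μ) :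
    ∃ y : Fin m → ℝ, y ≠ 0 ∧ (∀ i, 0 ≤ y i) ∧ A *ᵥ y = μ • y := by
  obtain ⟨x, hx0, hxe⟩ := hmax.1
  refine ⟨fun i => |x i|, ?_, fun i => abs_nonneg _, ?_⟩
  · intro h
    apply hx0
    funext i
    have := congrFun h i
    simpa [abs_eq_zero] using this
  set y : Fin m → ℝ := fun i => |x i| with hy
  have hyy : y ⬝ᵥ y = x ⬝ᵥ x := by
    simp [dotProduct, hy, abs_mul_abs_self]
  have hxAx : x ⬝ᵥ A *ᵥ x = μ * (x ⬝ᵥ x) := by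
    rw [hxe, dotProduct_smul, smul_eq_mul]
  have hle : x ⬝ᵥ A *ᵥ x ≤ y ⬝ᵥ A *ᵥ y := by
    rw [dot_mulVec_eq_sum, dot_mulVec_eq_sum]
    refine Finset.sum_le_sum fun i _ => Finset.sum_le_sum fun j _ => ?_
    have h1 : x i * (A i j * x j) = A i j * (x i * x j) := by ring
    have h2 : y i * (A i j * y j) = A i j * |x i * x j| := by
      rw [abs_mul]; ring
    rw [h1, h2]
    exact mul_le_mul_of_nonneg_left (le_abs_self _) (hnn i j)
  have heq : y ⬝ᵥ A *ᵥ y = μ * (y ⬝ᵥ y) := by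
    refine le_antisymm (rayleigh_le hA hmax y) ?_
    rw [hyy, ← hxAx]; exact hle
  -- M = μ•1 - A is PSD, and y is in its kernel
  set M : Matrix (Fin m) (Fin m) ℝ := μ • (1 : Matrix (Fin m) (Fin m) ℝ) - A with hM
  have hMv : ∀ z : Fin m → ℝ, M *ᵥ z = μ • z - A *ᵥ z := by
    intro z
    rw [hM, Matrix.sub_mulVec, Matrix.smul_mulVec, Matrix.one_mulVec]
  have hMherm : M.IsHermitian := by
    refine Matrix.IsHermitian.sub ?_ hA
    ext i j
    simp [Matrix.conjTranspose_apply, Matrix.one_apply, eq_comm]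
  have hMpsd : M.PosSemidef := by
    refine Matrix.posSemidef_iff_dotProduct_mulVec.mpr ⟨hMherm, fun z => ?_⟩
    have hst : star z = z := funext fun i => star_trivial _
    rw [hst, hMv, dotProduct_sub, dotProduct_smul, smul_eq_mul]
    have := rayleigh_le hA hmax z
    linarith
  have hker : M *ᵥ y = 0 := by
    rw [← hMpsd.dotProduct_mulVec_zero_iff]
    have hst : star y = y := funext fun i => star_trivial _
    rw [hst, hMv, dotProduct_sub, dotProduct_smul, smul_eq_mul, heq, sub_self]
  have := hMv y
  rw [hker] at this
  rw [eq_comm, ← sub_eq_zero]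
  exact this.symm

/-- One step of the eigenvector inequality along an edge. -/
lemma step_bound {G : SimpleGraph (Fin m)} {μ : ℝ} {y : Fin m → ℝ}
    (hy : ∀ i, 0 ≤ y i) (he : (adjMat G) *ᵥ y = μ • y)
    {a c : Fin m} (h : G.Adj a c) : y a ≤ μ * y c := by
  have h1 : (adjMat G *ᵥ y) c = μ * y c := by rw [he]; simp
  have h2 : (adjMat G *ᵥ y) c = ∑ j, adjMat G c j * y j := by
    simp [Matrix.mulVec, dotProduct]
  have h3 : adjMat G c a * y a ≤ ∑ j, adjMat G c j * y j :=
    Finset.single_le_sum (fun j _ => mul_nonneg (adjMat_nonneg G c j) (hy j))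
      (Finset.mem_univ a)
  rw [adjMat_adj G h.symm, one_mul] at h3
  rw [← h2, h1] at h3
  exact h3

/-- Eigenvector entries decay at most geometrically along walks. -/
lemma walk_bound {G : SimpleGraph (Fin m)} {μ : ℝ} (hμ : 0 ≤ μ) {y : Fin m → ℝ}
    (hy : ∀ i, 0 ≤ y i) (he : (adjMat G) *ᵥ y = μ • y)
    {a b : Fin m} (p : G.Walk a b) : y a ≤ μ ^ p.length * y b := by
  induction p with
  | nil => simp
  | @cons a c b h q ih =>
    calc y a ≤ μ * y c := step_bound hy he h
    _ ≤ μ * (μ ^ q.length * y b) := mul_le_mul_of_nonneg_left ih hμ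
    _ = μ ^ (SimpleGraph.Walk.cons h q).length * y b := by
        rw [SimpleGraph.Walk.length_cons, pow_succ]; ring

/-- If a graph has an edge, its maximal adjacency eigenvalue is at least 1. -/
lemma one_le_max_of_adj {G : SimpleGraph (Fin m)} {μ : ℝ}
    (hmax : IsMaxAdjEigenvalue (adjMat G) μ) {u v : Fin m} (huv : G.Adj u v) :
    1 ≤ μ := by
  classical
  have huvne : u ≠ v := huv.ne
  set z : Fin m → ℝ := fun i => if i = u ∨ i = v then 1 else 0 with hz
  have hznn : ∀ i, 0 ≤ z i := by intro i; rw [hz]; dsimp; split <;> norm_num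
  have hzu : z u = 1 := by simp [hz]
  have hzv : z v = 1 := by simp [hz]
  have hzz : z ⬝ᵥ z = 2 := by
    have h1 : ∀ i, z i * z i = if i ∈ ({u, v} : Finset (Fin m)) then (1:ℝ) else 0 := by
      intro i
      rw [hz]; dsimp
      by_cases h : i = u ∨ i = v
      · rw [if_pos h, if_pos (by simpa [Finset.mem_insert, Finset.mem_singleton] using h)]
        norm_num
      · rw [if_neg h, if_neg (by simpa [Finset.mem_insert, Finset.mem_singleton] using h)]
        norm_num
    rw [dotProduct, Finset.sum_congr rfl fun i _ => h1 i, Finset.sum_ite_mem,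
      Finset.univ_inter, Finset.sum_const, Finset.card_pair huvne]
    norm_num
  have hzAz : 2 ≤ z ⬝ᵥ adjMat G *ᵥ z := by
    set f : Fin m → ℝ := fun i => z i * (adjMat G *ᵥ z) i with hf
    have hAznn : ∀ i, 0 ≤ (adjMat G *ᵥ z) i := by
      intro i
      simp only [Matrix.mulVec, dotProduct]
      exact Finset.sum_nonneg fun j _ => mul_nonneg (adjMat_nonneg G i j) (hznn j)
    have hfnn : ∀ i, 0 ≤ f i := fun i => mul_nonneg (hznn i) (hAznn i)
    have hfu : 1 ≤ f u := by
      rw [hf]; dsimp; rw [hzu, one_mul]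
      simp only [Matrix.mulVec, dotProduct]
      have := Finset.single_le_sum
        (f := fun j => adjMat G u j * z j)
        (fun j _ => mul_nonneg (adjMat_nonneg G u j) (hznn j)) (Finset.mem_univ v)
      rwa [adjMat_adj G huv, hzv, one_mul] at this
    have hfv : 1 ≤ f v := by
      rw [hf]; dsimp; rw [hzv, one_mul]
      simp only [Matrix.mulVec, dotProduct]
      have := Finset.single_le_sum
        (f := fun j => adjMat G v j * z j)
        (fun j _ => mul_nonneg (adjMat_nonneg G v j) (hznn j)) (Finset.mem_univ u)
      rwa [adjMat_adj G huv.symm, hzu, one_mul] at this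
    have hsum : f u + f v ≤ ∑ i, f i := by
      rw [← Finset.sum_pair huvne]
      exact Finset.sum_le_sum_of_subset_of_nonneg (Finset.subset_univ _)
        (fun i _ _ => hfnn i)
    have : z ⬝ᵥ adjMat G *ᵥ z = ∑ i, f i := by
      simp [hf, dotProduct]
    rw [this]
    linarith
  have := rayleigh_le (adjMat_isHermitian G) hmax z
  rw [hzz] at this
  linarith

/-- The max adjacency eigenvalue is nonnegative. -/
lemma max_adj_nonneg {G : SimpleGraph (Fin m)} {μ : ℝ}
    (hmax : IsMaxAdjEigenvalue (adjMat G) μ) (u : Fin m) : 0 ≤ μ := by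
  classical
  have h := rayleigh_le (adjMat_isHermitian G) hmax (Pi.single u 1)
  have h1 : (Pi.single u 1 : Fin m → ℝ) ⬝ᵥ adjMat G *ᵥ Pi.single u 1 = adjMat G u u := by
    simp only [dotProduct, Matrix.mulVec, Pi.single_apply, mul_ite, mul_one, mul_zero,
      Finset.sum_ite_eq', Finset.mem_univ, if_true, ite_mul, one_mul, zero_mul]
  have h2 : (Pi.single u 1 : Fin m → ℝ) ⬝ᵥ Pi.single u 1 = 1 := by
    simp [dotProduct, Pi.single_apply]
  rw [h1, h2, adjMat_not_adj G (G.irrefl), mul_one] at h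
  exact h

end aux

theorem stmt5 {n : ℕ} (G : SimpleGraph (Fin n)) (hG : G.Connected)
    (D : ℕ) (hD1 : ∀ u v, G.dist u v ≤ D) (hD2 : ∃ u v, G.dist u v = D)
    (H : SimpleGraph (Fin n)) (hHG : H ≤ G) (hne : H ≠ G)
    (μG μH : ℝ) (hmaxG : IsMaxAdjEigenvalue (adjMat G) μG)
    (hmaxH : IsMaxAdjEigenvalue (adjMat H) μH) :
    μG - μH > 1 / (μG ^ (2 * D) * n) := by
  classical
  -- an edge of G not in H
  have hGH : ¬ G ≤ H := fun h => hne (le_antisymm hHG h)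
  have hGH2 : ¬ G.IsSubgraph H := by
    exact hGH
  unfold SimpleGraph.IsSubgraph at hGH2
  push_neg at hGH2
  obtain ⟨u, v, huv, hnuv⟩ := hGH2
  clear hGH
  have huvne : u ≠ v := huv.ne
  have hAG := adjMat_isHermitian G
  have hAH := adjMat_isHermitian H
  have hμG1 : 1 ≤ μG := one_le_max_of_adj hmaxG huv
  have hμG0 : 0 ≤ μG := by linarith
  have hμH0 : 0 ≤ μH := max_adj_nonneg hmaxH u
  have hn2 : (2:ℝ) ≤ n := by
    have : 1 < n := by
      have : Nontrivial (Fin n) := ⟨u, v, huvne⟩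
      simpa using Fintype.one_lt_card (α := Fin n)
    exact_mod_cast this
  have hn0 : (0:ℝ) < n := by linarith
  have hD0 : D ≠ 0 := by
    intro hD
    have h := hD1 u v
    rw [hD, Nat.le_zero] at h
    have : G.dist u v = 1 := SimpleGraph.dist_eq_one_iff_adj.mpr huv
    omega
  -- Perron vector of G
  obtain ⟨y, hy0, hynn, hye⟩ := exists_nonneg_eigenvector hAG (adjMat_nonneg G) hmaxG
  have : Nonempty (Fin n) := hG.nonempty
  obtain ⟨w, hw⟩ : ∃ w : Fin n, ∀ i, y i ≤ y w := Finite.exists_max y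
  have hyw : 0 < y w := by
    obtain ⟨i, hi⟩ : ∃ i, y i ≠ 0 := by
      by_contra h
      push_neg at h
      exact hy0 (funext h)
    exact lt_of_lt_of_le (lt_of_le_of_ne (hynn i) (Ne.symm hi)) (hw i)
  have hlow : ∀ a : Fin n, y w ≤ μG ^ D * y a := by
    intro a
    obtain ⟨p, hp⟩ := hG.exists_walk_length_eq_dist w a
    have hb := walk_bound hμG0 hynn hye p
    rw [hp] at hb
    calc y w ≤ μG ^ G.dist w a * y a := hb
    _ ≤ μG ^ D * y a :=
        mul_le_mul_of_nonneg_right (pow_le_pow_right₀ hμG1 (hD1 w a)) (hynn a)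
  have hypos : ∀ a : Fin n, 0 < y a := by
    intro a
    by_contra hc
    push_neg at hc
    have h0 : y a = 0 := le_antisymm hc (hynn a)
    have := hlow a
    rw [h0, mul_zero] at this
    linarith
  -- nonnegative eigenvector of H
  obtain ⟨z, hz0, hznn, hze⟩ := exists_nonneg_eigenvector hAH (adjMat_nonneg H) hmaxH
  obtain ⟨wz, hwz⟩ : ∃ wz : Fin n, ∀ i, z i ≤ z wz := Finite.exists_max z
  have hzwz : 0 < z wz := by
    obtain ⟨i, hi⟩ : ∃ i, z i ≠ 0 := by
      by_contra h
      push_neg at h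
      exact hz0 (funext h)
    exact lt_of_lt_of_le (lt_of_le_of_ne (hznn i) (Ne.symm hi)) (hwz i)
  -- walk from wz towards u, stopping at the first missing edge
  have hchain : ∀ (b e : Fin n) (p : G.Walk b e),
      (∃ s t : Fin n, ∃ j : ℕ,
        j ≤ p.length ∧ G.Adj s t ∧ ¬ H.Adj s t ∧ z b ≤ μH ^ j * z s) ∨
      z b ≤ μH ^ p.length * z e := by
    intro b e p
    induction p with
    | nil => right; simp
    | @cons b c e h q ih =>
      by_cases hbc : H.Adj b c
      · have hstep : z b ≤ μH * z c := step_bound hznn hze hbc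
        rcases ih with ⟨s, t, j, hj, hst, hnst, hzb⟩ | hzb
        · left
          refine ⟨s, t, j + 1, ?_, hst, hnst, ?_⟩
          · rw [SimpleGraph.Walk.length_cons]; omega
          · calc z b ≤ μH * z c := hstep
            _ ≤ μH * (μH ^ j * z s) := mul_le_mul_of_nonneg_left hzb hμH0
            _ = μH ^ (j + 1) * z s := by rw [pow_succ]; ring
        · right
          rw [SimpleGraph.Walk.length_cons]
          calc z b ≤ μH * z c := hstep
          _ ≤ μH * (μH ^ q.length * z e) := mul_le_mul_of_nonneg_left hzb hμH0
          _ = μH ^ (q.length + 1) * z e := by rw [pow_succ]; ring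
      · left
        exact ⟨b, c, 0, Nat.zero_le _, h, hbc, by simp⟩
  obtain ⟨p, hp⟩ := hG.exists_walk_length_eq_dist wz u
  obtain ⟨s, t, j, hj, hst, hnst, hzb⟩ :
      ∃ s t : Fin n, ∃ j : ℕ,
        j ≤ p.length ∧ G.Adj s t ∧ ¬ H.Adj s t ∧ z wz ≤ μH ^ j * z s := by
    rcases hchain wz u p with h | h
    · exact h
    · exact ⟨u, v, p.length, le_refl _, huv, hnuv, h⟩
  have hjD : j ≤ D := by
    rw [hp] at hj
    exact le_trans hj (hD1 wz u)
  have hzs : 0 < z s := by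
    by_contra hc
    push_neg at hc
    have h0 : z s = 0 := le_antisymm hc (hznn s)
    rw [h0, mul_zero] at hzb
    linarith
  -- the difference matrix
  set B : Matrix (Fin n) (Fin n) ℝ := adjMat G - adjMat H with hB
  have hBnn : ∀ i j, 0 ≤ B i j := by
    intro i j
    rw [hB]
    by_cases h : H.Adj i j
    · simp [adjMat_adj G (hHG h), adjMat_adj H h]
    · simp only [Matrix.sub_apply, adjMat_not_adj H h, sub_zero]
      exact adjMat_nonneg G i j
  have hBts : B t s = 1 := by
    rw [hB]
    simp [adjMat_adj G hst.symm, adjMat_not_adj H (fun h => hnst h.symm)]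
  -- key identity
  have hid : y ⬝ᵥ B *ᵥ z = (μG - μH) * (y ⬝ᵥ z) := by
    rw [hB, Matrix.sub_mulVec, dotProduct_sub]
    have h1 : y ⬝ᵥ adjMat G *ᵥ z = μG * (y ⬝ᵥ z) := by
      rw [Matrix.dotProduct_mulVec, ← Matrix.mulVec_transpose, adjMat_transpose, hye,
        smul_dotProduct, smul_eq_mul]
    have h2 : y ⬝ᵥ adjMat H *ᵥ z = μH * (y ⬝ᵥ z) := by
      rw [hze, dotProduct_smul, smul_eq_mul]
    rw [h1, h2]
    ring
  -- lower bound on the bilinear form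
  have hBznn : ∀ a, 0 ≤ (B *ᵥ z) a := by
    intro a
    simp only [Matrix.mulVec, dotProduct]
    exact Finset.sum_nonneg fun i _ => mul_nonneg (hBnn a i) (hznn i)
  have hlb : y t * z s ≤ y ⬝ᵥ B *ᵥ z := by
    have h1 : z s ≤ (B *ᵥ z) t := by
      simp only [Matrix.mulVec, dotProduct]
      have := Finset.single_le_sum (f := fun i => B t i * z i)
        (fun i _ => mul_nonneg (hBnn t i) (hznn i)) (Finset.mem_univ s)
      rwa [hBts, one_mul] at this
    have h2 : y t * (B *ᵥ z) t ≤ ∑ a, y a * (B *ᵥ z) a :=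
      Finset.single_le_sum (f := fun a => y a * (B *ᵥ z) a)
        (fun a _ => mul_nonneg (hynn a) (hBznn a)) (Finset.mem_univ t)
    calc y t * z s ≤ y t * (B *ᵥ z) t := mul_le_mul_of_nonneg_left h1 (hynn t)
    _ ≤ ∑ a, y a * (B *ᵥ z) a := h2
    _ = y ⬝ᵥ B *ᵥ z := by simp [dotProduct]
  -- bounds on y ⬝ᵥ z
  have hyzpos : 0 < y ⬝ᵥ z := by
    have h1 : y wz * z wz ≤ ∑ a, y a * z a :=
      Finset.single_le_sum (f := fun a => y a * z a)
        (fun a _ => mul_nonneg (hynn a) (hznn a)) (Finset.mem_univ wz)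
    have h2 : y ⬝ᵥ z = ∑ a, y a * z a := by simp [dotProduct]
    rw [h2]
    exact lt_of_lt_of_le (mul_pos (hypos wz) hzwz) h1
  have hyzub : y ⬝ᵥ z ≤ n * (y w * z wz) := by
    have h1 : y ⬝ᵥ z = ∑ a, y a * z a := by simp [dotProduct]
    rw [h1]
    calc ∑ a, y a * z a ≤ ∑ _a : Fin n, y w * z wz :=
        Finset.sum_le_sum fun a _ => mul_le_mul (hw a) (hwz a) (hznn a) (hyw.le)
    _ = n * (y w * z wz) := by
        rw [Finset.sum_const, Finset.card_univ, Fintype.card_fin, nsmul_eq_mul]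
  -- strict positivity of the gap
  have hgap : 0 < μG - μH := by
    by_contra hc
    push_neg at hc
    have h1 : (μG - μH) * (y ⬝ᵥ z) ≤ 0 := mul_nonpos_of_nonpos_of_nonneg hc hyzpos.le
    have h2 : 0 < y t * z s := mul_pos (hypos t) hzs
    rw [← hid] at h1
    linarith
  by_cases hμgt : 1 < μG
  · -- main case
    have hμGpos : (0:ℝ) < μG := by linarith
    have hPpos : 0 < μG ^ D := pow_pos hμGpos D
    have hkey : μH ^ j < μG ^ D := by
      rcases Nat.eq_zero_or_pos j with hj0 | hjpos
      · rw [hj0, pow_zero]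
        exact one_lt_pow₀ hμgt hD0
      · have h7 : μH ^ j < μG ^ j := pow_lt_pow_left₀ (by linarith) hμH0 (by omega)
        calc μH ^ j < μG ^ j := h7
        _ ≤ μG ^ D := pow_le_pow_right₀ hμG1 hjD
    have e1 : y t * z s ≤ (μG - μH) * (↑n * (y w * z wz)) := by
      calc y t * z s ≤ y ⬝ᵥ B *ᵥ z := hlb
      _ = (μG - μH) * (y ⬝ᵥ z) := hid
      _ ≤ (μG - μH) * (↑n * (y w * z wz)) :=
          mul_le_mul_of_nonneg_left hyzub hgap.le
    have e2 : y w ≤ μG ^ D * y t := hlow t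
    have e3 : z wz ≤ μH ^ j * z s := hzb
    have hts : 0 < y t * z s := mul_pos (hypos t) hzs
    have e4 : y w * z wz ≤ (μG ^ D * y t) * (μH ^ j * z s) :=
      mul_le_mul e2 e3 hzwz.le (mul_nonneg hPpos.le (hynn t))
    have e5 : 1 ≤ (μG - μH) * ↑n * (μG ^ D * μH ^ j) := by
      have h6 : y t * z s ≤ (μG - μH) * ↑n * (μG ^ D * μH ^ j) * (y t * z s) := by
        calc y t * z s ≤ (μG - μH) * (↑n * (y w * z wz)) := e1
        _ ≤ (μG - μH) * (↑n * ((μG ^ D * y t) * (μH ^ j * z s))) := by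
            apply mul_le_mul_of_nonneg_left _ hgap.le
            exact mul_le_mul_of_nonneg_left e4 hn0.le
        _ = (μG - μH) * ↑n * (μG ^ D * μH ^ j) * (y t * z s) := by ring
      exact le_of_mul_le_mul_right (by rw [one_mul]; exact h6) hts
    have e6 : (μG - μH) * ↑n * (μG ^ D * μH ^ j) < (μG - μH) * ↑n * (μG ^ D * μG ^ D) := by
      apply mul_lt_mul_of_pos_left _ (mul_pos hgap hn0)
      exact mul_lt_mul_of_pos_left hkey hPpos
    rw [gt_iff_lt, div_lt_iff₀ (mul_pos (pow_pos hμGpos _) hn0)]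
    calc (1:ℝ) ≤ (μG - μH) * ↑n * (μG ^ D * μH ^ j) := e5
    _ < (μG - μH) * ↑n * (μG ^ D * μG ^ D) := e6
    _ = (μG - μH) * (μG ^ (2 * D) * ↑n) := by
        rw [show μG ^ (2 * D) = μG ^ D * μG ^ D by rw [← pow_add, two_mul]]
        ring
  · -- degenerate case μG = 1
    have hμGeq : μG = 1 := le_antisymm (not_lt.mp hμgt) hμG1
    have hHempty : ∀ a b, ¬ H.Adj a b := by
      intro a b hab
      have := one_le_max_of_adj hmaxH hab
      rw [hμGeq] at hgap
      linarith
    have hμHeq : μH = 0 := by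
      obtain ⟨x, hx0, hxe⟩ := hmaxH.1
      have hA0 : adjMat H = 0 := by
        ext i jj
        rw [adjMat_not_adj H (hHempty i jj)]
        simp
      rw [hA0, Matrix.zero_mulVec] at hxe
      obtain ⟨i, hi⟩ : ∃ i, x i ≠ 0 := by
        by_contra hc
        push_neg at hc
        exact hx0 (funext hc)
      have h := congrFun hxe.symm i
      simp only [Pi.smul_apply, smul_eq_mul, Pi.zero_apply] at h
      rcases mul_eq_zero.mp h with h' | h'
      · exact h'
      · exact absurd h' hi
    rw [hμGeq, hμHeq, one_pow, one_mul, sub_zero, gt_iff_lt, div_lt_iff₀ hn0]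
    linarith
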